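/- arXiv:1406.3422 — 3 statements merged into one kernel-verified Lean document; each statement's English description precedes it below -/
import Mathlib

section
/- Suppose there are constants d > 0 and k > 0 and a nondecreasing function θ : [0,∞) → [0,∞) such that ‖S(L) u₀‖_X ≤ θ(L) e^{d / L^k} ( ∫_0^L ‖B S(t) u₀‖_U² dt )^{1/2} for all L > 0 and all u₀ ∈ X. Then there exists a constant N > 0, depending only on d and k, such that for all T > 0 and all u₀ ∈ X: ‖S(T) u₀‖_X ≤ F(T) e^{N / T^k} ∫_0^T ‖B S(t) u₀‖_U dt, where F(T) := θ(T)² ‖B‖ M e^{α T}. -/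
open MeasureTheory Set

private lemma geom_le_aux {ρ : ℝ} (h0 : 0 ≤ ρ) (h1 : ρ < 1) (n : ℕ) :
    ∑ j ∈ Finset.range n, ρ ^ j ≤ (1 - ρ)⁻¹ := by
  have h2 : 0 < 1 - ρ := by linarith
  rw [geom_sum_eq h1.ne]
  have he : (ρ ^ n - 1) / (ρ - 1) = (1 - ρ ^ n) / (1 - ρ) := by
    rw [← neg_div_neg_eq]; ring_nf
  rw [he, ← one_div]
  have := pow_nonneg h0 n
  gcongr
  linarith

set_option maxHeartbeats 1000000 in
/-- **Telescoping series method: from `L²`- to `L¹`-observability on time intervals.**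
If `‖S L u₀‖ ≤ θ(L) e^{d/L^k} (∫_0^L ‖B (S t u₀)‖² dt)^{1/2}` for all `L > 0`, then there
is `N = N(d,k) > 0` such that
`‖S T u₀‖ ≤ θ(T)² ‖B‖ M e^{αT} e^{N/T^k} ∫_0^T ‖B (S t u₀)‖ dt` for all `T > 0`. -/
theorem telescoping_L2_to_L1_observability
    {X U : Type*}
    [NormedAddCommGroup X] [InnerProductSpace ℝ X] [CompleteSpace X]
    [NormedAddCommGroup U] [InnerProductSpace ℝ U] [CompleteSpace U]
    (S : ℝ → X →L[ℝ] X)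
    (hS0 : S 0 = ContinuousLinearMap.id ℝ X)
    (hSsemi : ∀ t s : ℝ, 0 ≤ t → 0 ≤ s → S (t + s) = (S t).comp (S s))
    (hScont : ∀ x : X, ContinuousOn (fun t => S t x) (Set.Ici 0))
    (M α : ℝ) (hM : 0 < M) (hα : 0 ≤ α)
    (hSbound : ∀ t : ℝ, 0 ≤ t → ∀ x : X, ‖S t x‖ ≤ M * Real.exp (α * t) * ‖x‖)
    (B : X →L[ℝ] U)
    (d k : ℝ) (hd : 0 < d) (hk : 0 < k)
    (θ : ℝ → ℝ) (hθ : ∀ s : ℝ, 0 ≤ s → 0 ≤ θ s)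
    (hθmono : ∀ s t : ℝ, 0 ≤ s → s ≤ t → θ s ≤ θ t)
    (hobs : ∀ L : ℝ, 0 < L → ∀ u₀ : X,
      ‖S L u₀‖ ≤ θ L * Real.exp (d / L ^ k) *
        Real.sqrt (∫ t in (0:ℝ)..L, ‖B (S t u₀)‖ ^ 2)) :
    ∃ N > (0:ℝ), ∀ T : ℝ, 0 < T → ∀ u₀ : X,
      ‖S T u₀‖ ≤ (θ T ^ 2 * ‖B‖ * M * Real.exp (α * T)) * Real.exp (N / T ^ k) *
        ∫ t in (0:ℝ)..T, ‖B (S t u₀)‖ := by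
  -- constants depending only on d, k
  set q : ℝ := (2:ℝ) ^ (-(2*k)⁻¹ : ℝ) with hq_def
  have hq_pos : 0 < q := Real.rpow_pos_of_pos two_pos _
  have hq_lt_one : q < 1 := by
    apply Real.rpow_lt_one_of_one_lt_of_neg one_lt_two
    have : (0:ℝ) < (2*k)⁻¹ := by positivity
    linarith
  set ρ : ℝ := (2:ℝ) ^ (-(2:ℝ)⁻¹ : ℝ) with hρ_def
  have hρ_pos : 0 < ρ := Real.rpow_pos_of_pos two_pos _
  have hρ_lt_one : ρ < 1 := by
    apply Real.rpow_lt_one_of_one_lt_of_neg one_lt_two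
    norm_num
  have h1q : 0 < 1 - q := by linarith
  have h1ρ : 0 < 1 - ρ := by linarith
  have hqk : q ^ k = ρ := by
    rw [← Real.rpow_mul (by norm_num : (0:ℝ) ≤ 2)]
    rw [hρ_def]
    congr 1
    field_simp
  set N : ℝ := d * (2/(1-q))^k * (1-ρ)⁻¹ with hN_def
  have hNpos : 0 < N := by
    have h1 : (0:ℝ) < (2/(1-q))^k := Real.rpow_pos_of_pos (by positivity) _
    positivity
  refine ⟨N, hNpos, ?_⟩
  intro T hT u₀
  -- basic notation
  set f : ℝ → ℝ := fun t => ‖B (S t u₀)‖ with hf_def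
  have hf0 : ∀ t, 0 ≤ f t := fun t => norm_nonneg _
  have hf_cont : ContinuousOn f (Ici 0) := by
    exact (continuous_norm.comp B.continuous).comp_continuousOn (hScont u₀)
  have hsub : ∀ a b : ℝ, 0 ≤ a → 0 ≤ b → Set.uIcc a b ⊆ Ici 0 := by
    intro a b ha hb x hx
    have := hx.1
    have hmin : (0:ℝ) ≤ min a b := le_min ha hb
    exact le_trans hmin this
  have hf_int : ∀ a b : ℝ, 0 ≤ a → 0 ≤ b → IntervalIntegrable f volume a b := by
    intro a b ha hb
    exact (hf_cont.mono (hsub a b ha hb)).intervalIntegrable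
  have hf2_int : ∀ a b : ℝ, 0 ≤ a → 0 ≤ b →
      IntervalIntegrable (fun t => f t ^ 2) volume a b := by
    intro a b ha hb
    exact ((hf_cont.mono (hsub a b ha hb)).pow 2).intervalIntegrable
  set J : ℝ := ∫ t in (0:ℝ)..T, f t with hJ_def
  have hJ0 : 0 ≤ J :=
    intervalIntegral.integral_nonneg hT.le (fun t _ => hf0 t)
  have hθT : 0 ≤ θ T := hθ T hT.le
  -- general L² → bound by (C * J) on subintervals
  have key : ∀ s r : ℝ, 0 ≤ s → s < r → r ≤ T →
      ‖S r u₀‖ ≤ θ T * Real.exp (d / (r - s) ^ k) *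
        Real.sqrt (‖B‖ * M * Real.exp (α * T) * ‖S s u₀‖ * J) := by
    intro s r hs hsr hrT
    have hL : 0 < r - s := sub_pos.mpr hsr
    have hre : S r u₀ = S (r - s) (S s u₀) := by
      have h' := hSsemi (r - s) s hL.le hs
      have h'' : r - s + s = r := by ring
      conv_lhs => rw [← h'', h']
      rfl
    have hobs' := hobs (r - s) hL (S s u₀)
    have hI1 : (∫ t in (0:ℝ)..(r - s), ‖B (S t (S s u₀))‖ ^ 2)
        = ∫ t in s..r, f t ^ 2 := by
      have hcg : Set.EqOn (fun t => ‖B (S t (S s u₀))‖ ^ 2)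
          (fun t => f (t + s) ^ 2) (Set.uIcc 0 (r - s)) := by
        intro t ht
        have ht0 : 0 ≤ t := by
          rw [Set.uIcc_of_le hL.le] at ht; exact ht.1
        have : S t (S s u₀) = S (t + s) u₀ := by rw [hSsemi t s ht0 hs]; rfl
        simp only [this, hf_def]
      rw [intervalIntegral.integral_congr hcg]
      have := intervalIntegral.integral_comp_add_right (a := 0) (b := r - s)
        (fun t => f t ^ 2) s
      simpa using this
    have hfs : ∀ t ∈ Set.Icc s r, f t ≤ ‖B‖ * M * Real.exp (α * T) * ‖S s u₀‖ := by
      intro t ht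
      have ht0 : 0 ≤ t - s := by linarith [ht.1]
      have hts : S t u₀ = S (t - s) (S s u₀) := by
        have h' := hSsemi (t - s) s ht0 hs
        have h'' : t - s + s = t := by ring
        conv_lhs => rw [← h'', h']
        rfl
      have h1 : f t ≤ ‖B‖ * ‖S t u₀‖ := B.le_opNorm _
      have h2 : ‖S (t - s) (S s u₀)‖ ≤ M * Real.exp (α * (t - s)) * ‖S s u₀‖ :=
        hSbound _ ht0 _
      have h3 : Real.exp (α * (t - s)) ≤ Real.exp (α * T) := by
        apply Real.exp_le_exp.mpr
        have : t - s ≤ T := by linarith [ht.2]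
        nlinarith
      calc f t ≤ ‖B‖ * ‖S t u₀‖ := h1
        _ = ‖B‖ * ‖S (t - s) (S s u₀)‖ := by rw [hts]
        _ ≤ ‖B‖ * (M * Real.exp (α * (t - s)) * ‖S s u₀‖) :=
            mul_le_mul_of_nonneg_left h2 (norm_nonneg _)
        _ ≤ ‖B‖ * (M * Real.exp (α * T) * ‖S s u₀‖) := by
            apply mul_le_mul_of_nonneg_left _ (norm_nonneg _)
            apply mul_le_mul_of_nonneg_right _ (norm_nonneg _)
            exact mul_le_mul_of_nonneg_left h3 hM.le
        _ = ‖B‖ * M * Real.exp (α * T) * ‖S s u₀‖ := by ring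
    have hC0 : 0 ≤ ‖B‖ * M * Real.exp (α * T) * ‖S s u₀‖ := by positivity
    have hI2 : (∫ t in s..r, f t ^ 2)
        ≤ ‖B‖ * M * Real.exp (α * T) * ‖S s u₀‖ * ∫ t in s..r, f t := by
      rw [← intervalIntegral.integral_const_mul]
      apply intervalIntegral.integral_mono_on hsr.le (hf2_int s r hs (by linarith))
        ((hf_int s r hs (by linarith)).const_mul _)
      intro t ht
      have h1 := hfs t ht
      calc f t ^ 2 = f t * f t := by ring
        _ ≤ ‖B‖ * M * Real.exp (α * T) * ‖S s u₀‖ * f t :=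
            mul_le_mul_of_nonneg_right h1 (hf0 t)
    have hI3 : (∫ t in s..r, f t) ≤ J := by
      apply intervalIntegral.integral_mono_interval hs hsr.le hrT
        (Filter.Eventually.of_forall fun t => hf0 t) (hf_int 0 T le_rfl hT.le)
    have hI4 : (∫ t in s..r, f t ^ 2)
        ≤ ‖B‖ * M * Real.exp (α * T) * ‖S s u₀‖ * J :=
      le_trans hI2 (mul_le_mul_of_nonneg_left hI3 hC0)
    rw [hI1] at hobs'
    calc ‖S r u₀‖ = ‖S (r - s) (S s u₀)‖ := by rw [hre]
      _ ≤ θ (r - s) * Real.exp (d / (r - s) ^ k) * Real.sqrt (∫ t in s..r, f t ^ 2) :=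
          hobs'
      _ ≤ θ T * Real.exp (d / (r - s) ^ k) *
          Real.sqrt (‖B‖ * M * Real.exp (α * T) * ‖S s u₀‖ * J) := by
          apply mul_le_mul
          · exact mul_le_mul_of_nonneg_right
              (hθmono _ _ hL.le (by linarith)) (Real.exp_pos _).le
          · exact Real.sqrt_le_sqrt hI4
          · exact Real.sqrt_nonneg _
          · exact mul_nonneg hθT (Real.exp_pos _).le
  -- split on J = 0 or J > 0
  rcases eq_or_lt_of_le hJ0 with hJz | hJpos
  · -- degenerate case J = 0
    have hobsT := hobs T hT u₀
    have hI2 : (∫ t in (0:ℝ)..T, f t ^ 2)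
        ≤ ‖B‖ * M * Real.exp (α * T) * ‖u₀‖ * J := by
      rw [hJ_def, ← intervalIntegral.integral_const_mul]
      apply intervalIntegral.integral_mono_on hT.le (hf2_int 0 T le_rfl hT.le)
        ((hf_int 0 T le_rfl hT.le).const_mul _)
      intro t ht
      have h1 : f t ≤ ‖B‖ * M * Real.exp (α * T) * ‖u₀‖ := by
        have h2 := hSbound t ht.1 u₀
        have h3 : Real.exp (α * t) ≤ Real.exp (α * T) := by
          apply Real.exp_le_exp.mpr
          nlinarith [ht.2]
        calc f t ≤ ‖B‖ * ‖S t u₀‖ := B.le_opNorm _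
          _ ≤ ‖B‖ * (M * Real.exp (α * t) * ‖u₀‖) :=
              mul_le_mul_of_nonneg_left h2 (norm_nonneg _)
          _ ≤ ‖B‖ * (M * Real.exp (α * T) * ‖u₀‖) := by
              apply mul_le_mul_of_nonneg_left _ (norm_nonneg _)
              apply mul_le_mul_of_nonneg_right _ (norm_nonneg _)
              exact mul_le_mul_of_nonneg_left h3 hM.le
          _ = ‖B‖ * M * Real.exp (α * T) * ‖u₀‖ := by ring
      calc f t ^ 2 = f t * f t := sq (f t) ▸ by ring
        _ ≤ ‖B‖ * M * Real.exp (α * T) * ‖u₀‖ * f t :=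
            mul_le_mul_of_nonneg_right h1 (hf0 t)
    rw [← hJz, mul_zero] at hI2
    have hs0 : Real.sqrt (∫ t in (0:ℝ)..T, ‖B (S t u₀)‖ ^ 2) = 0 :=
      Real.sqrt_eq_zero'.mpr hI2
    have hle0 : ‖S T u₀‖ ≤ 0 := by
      calc ‖S T u₀‖ ≤ θ T * Real.exp (d / T ^ k) *
            Real.sqrt (∫ t in (0:ℝ)..T, ‖B (S t u₀)‖ ^ 2) := hobsT
        _ = 0 := by rw [hs0]; ring
    rw [← hJz, mul_zero]
    exact hle0
  · -- main case J > 0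
    by_cases hθz : θ T = 0
    · have hobsT := hobs T hT u₀
      rw [hθz, zero_mul, zero_mul] at hobsT
      calc ‖S T u₀‖ ≤ 0 := hobsT
        _ ≤ _ := by
          apply mul_nonneg (mul_nonneg (by positivity) (Real.exp_pos _).le) hJ0
    have hθpos : 0 < θ T := lt_of_le_of_ne hθT (Ne.symm hθz)
    have hJne : (∀ t, f t = 0) → False := by
      intro hfz
      have : J = 0 := by
        rw [hJ_def,
          intervalIntegral.integral_congr (g := fun _ => (0:ℝ)) (fun t _ => hfz t)]
        simp
      linarith
    set c : ℝ := ‖B‖ * M * Real.exp (α * T) with hc_def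
    have hBpos : 0 < ‖B‖ := by
      rcases eq_or_lt_of_le (norm_nonneg B) with hB | hB
      · exfalso
        apply hJne
        intro t
        have h1 := B.le_opNorm (S t u₀)
        have h0 := hf0 t
        rw [← hB, zero_mul] at h1
        have : f t ≤ 0 := h1
        linarith
      · exact hB
    have hcpos : 0 < c := by rw [hc_def]; positivity
    have hu : u₀ ≠ 0 := by
      intro h
      apply hJne
      intro t
      simp [hf_def, h]
    set G : ℝ := M * Real.exp (α * T) * ‖u₀‖ with hG_def
    have hGpos : 0 < G := by
      have h0 : 0 < ‖u₀‖ := norm_pos_iff.mpr hu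
      rw [hG_def]; positivity
    set D : ℝ := θ T * Real.sqrt c with hD_def
    have hDpos : 0 < D := mul_pos hθpos (Real.sqrt_pos.mpr hcpos)
    -- the telescoping sequence of times
    set tt : ℕ → ℝ := fun n => T / 2 * (1 + q ^ n) with htt_def
    set ℓ : ℕ → ℝ := fun n => T / 2 * (1 - q) * q ^ n with hℓ_def
    have hqn_pos : ∀ n : ℕ, 0 < q ^ n := fun n => pow_pos hq_pos n
    have hqn_le : ∀ n : ℕ, q ^ n ≤ 1 := fun n => pow_le_one₀ hq_pos.le hq_lt_one.le
    have htt_pos : ∀ n, 0 < tt n := by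
      intro n; simp only [htt_def]; nlinarith [hqn_pos n]
    have htt_le : ∀ n, tt n ≤ T := by
      intro n; simp only [htt_def]; nlinarith [hqn_le n]
    have htt_dec : ∀ n, tt (n + 1) < tt n := by
      intro n
      simp only [htt_def]
      have h1 : q ^ (n + 1) < q ^ n := by
        rw [pow_succ]
        nlinarith [hqn_pos n]
      nlinarith
    have hdiff : ∀ n, tt n - tt (n + 1) = ℓ n := by
      intro n; simp only [htt_def, hℓ_def, pow_succ]; ring
    have hℓ_pos : ∀ n, 0 < ℓ n := by
      intro n; simp only [hℓ_def]
      have := hqn_pos n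
      positivity
    have htt0 : tt 0 = T := by simp only [htt_def, pow_zero]; ring
    have stepn : ∀ n : ℕ, ‖S (tt n) u₀‖ ≤ θ T * Real.exp (d / ℓ n ^ k) *
        Real.sqrt (c * ‖S (tt (n + 1)) u₀‖ * J) := by
      intro n
      have h := key (tt (n + 1)) (tt n) (htt_pos (n + 1)).le (htt_dec n) (htt_le n)
      rwa [hdiff n] at h
    have hgG : ∀ n, ‖S (tt n) u₀‖ ≤ G := by
      intro n
      have h1 := hSbound (tt n) (htt_pos n).le u₀
      have h2 : Real.exp (α * tt n) ≤ Real.exp (α * T) := by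
        apply Real.exp_le_exp.mpr
        nlinarith [htt_le n, htt_pos n]
      rw [hG_def]
      calc ‖S (tt n) u₀‖ ≤ M * Real.exp (α * tt n) * ‖u₀‖ := h1
        _ ≤ M * Real.exp (α * T) * ‖u₀‖ := by
            apply mul_le_mul_of_nonneg_right _ (norm_nonneg _)
            exact mul_le_mul_of_nonneg_left h2 hM.le
    -- the main telescoping induction
    have main : ∀ n : ℕ, ‖S T u₀‖ ≤
        D ^ (∑ j ∈ Finset.range n, ((1:ℝ) / 2) ^ j) *
        Real.exp (∑ j ∈ Finset.range n, ((1:ℝ) / 2) ^ j * (d / ℓ j ^ k)) *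
        ‖S (tt n) u₀‖ ^ (((1:ℝ) / 2) ^ n) * J ^ (1 - ((1:ℝ) / 2) ^ n) := by
      intro n
      induction n with
      | zero =>
        simp only [Finset.range_zero, Finset.sum_empty, Real.rpow_zero, Real.exp_zero,
          pow_zero, Real.rpow_one, one_mul, sub_self, mul_one]
        rw [htt0]
      | succ n ih =>
        have hεn : (0:ℝ) < ((1:ℝ) / 2) ^ n := by positivity
        have hg' : (0:ℝ) ≤ ‖S (tt (n + 1)) u₀‖ := norm_nonneg _
        have hmono : ‖S (tt n) u₀‖ ^ (((1:ℝ) / 2) ^ n) ≤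
            (θ T * Real.exp (d / ℓ n ^ k) * Real.sqrt (c * ‖S (tt (n + 1)) u₀‖ * J))
              ^ (((1:ℝ) / 2) ^ n) :=
          Real.rpow_le_rpow (norm_nonneg _) (stepn n) hεn.le
        have hexpand : (θ T * Real.exp (d / ℓ n ^ k) *
              Real.sqrt (c * ‖S (tt (n + 1)) u₀‖ * J)) ^ (((1:ℝ) / 2) ^ n)
            = D ^ (((1:ℝ) / 2) ^ n) * Real.exp (((1:ℝ) / 2) ^ n * (d / ℓ n ^ k)) *
              ‖S (tt (n + 1)) u₀‖ ^ (((1:ℝ) / 2) ^ (n + 1)) *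
              J ^ (((1:ℝ) / 2) ^ (n + 1)) := by
          have e1 : Real.sqrt (c * ‖S (tt (n + 1)) u₀‖ * J)
              = Real.sqrt c * Real.sqrt ‖S (tt (n + 1)) u₀‖ * Real.sqrt J := by
            rw [Real.sqrt_mul (by positivity) J, Real.sqrt_mul hcpos.le]
          have regroup : θ T * Real.exp (d / ℓ n ^ k) *
              (Real.sqrt c * Real.sqrt ‖S (tt (n + 1)) u₀‖ * Real.sqrt J)
              = θ T * Real.sqrt c * Real.exp (d / ℓ n ^ k) *
                Real.sqrt ‖S (tt (n + 1)) u₀‖ * Real.sqrt J := by ring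
          rw [e1, regroup, ← hD_def]
          rw [Real.mul_rpow (by positivity) (Real.sqrt_nonneg _),
              Real.mul_rpow (by positivity) (Real.sqrt_nonneg _),
              Real.mul_rpow hDpos.le (Real.exp_pos _).le]
          have eE : Real.exp (d / ℓ n ^ k) ^ (((1:ℝ) / 2) ^ n)
              = Real.exp (((1:ℝ) / 2) ^ n * (d / ℓ n ^ k)) := by
            rw [← Real.exp_mul]
            congr 1
            ring
          have eg : Real.sqrt ‖S (tt (n + 1)) u₀‖ ^ (((1:ℝ) / 2) ^ n)
              = ‖S (tt (n + 1)) u₀‖ ^ (((1:ℝ) / 2) ^ (n + 1)) := by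
            rw [Real.sqrt_eq_rpow, ← Real.rpow_mul hg']
            congr 1
            rw [pow_succ]; ring
          have eJ : Real.sqrt J ^ (((1:ℝ) / 2) ^ n)
              = J ^ (((1:ℝ) / 2) ^ (n + 1)) := by
            rw [Real.sqrt_eq_rpow, ← Real.rpow_mul hJ0]
            congr 1
            rw [pow_succ]; ring
          rw [eE, eg, eJ]
        calc ‖S T u₀‖ ≤
            D ^ (∑ j ∈ Finset.range n, ((1:ℝ) / 2) ^ j) *
            Real.exp (∑ j ∈ Finset.range n, ((1:ℝ) / 2) ^ j * (d / ℓ j ^ k)) *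
            ‖S (tt n) u₀‖ ^ (((1:ℝ) / 2) ^ n) * J ^ (1 - ((1:ℝ) / 2) ^ n) := ih
          _ ≤ D ^ (∑ j ∈ Finset.range n, ((1:ℝ) / 2) ^ j) *
              Real.exp (∑ j ∈ Finset.range n, ((1:ℝ) / 2) ^ j * (d / ℓ j ^ k)) *
              ((θ T * Real.exp (d / ℓ n ^ k) *
                Real.sqrt (c * ‖S (tt (n + 1)) u₀‖ * J)) ^ (((1:ℝ) / 2) ^ n)) *
              J ^ (1 - ((1:ℝ) / 2) ^ n) := by
              gcongr
          _ = (D ^ (∑ j ∈ Finset.range n, ((1:ℝ) / 2) ^ j) * D ^ (((1:ℝ) / 2) ^ n)) *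
              (Real.exp (∑ j ∈ Finset.range n, ((1:ℝ) / 2) ^ j * (d / ℓ j ^ k)) *
               Real.exp (((1:ℝ) / 2) ^ n * (d / ℓ n ^ k))) *
              ‖S (tt (n + 1)) u₀‖ ^ (((1:ℝ) / 2) ^ (n + 1)) *
              (J ^ (1 - ((1:ℝ) / 2) ^ n) * J ^ (((1:ℝ) / 2) ^ (n + 1))) := by
              rw [hexpand]; ring
          _ = D ^ (∑ j ∈ Finset.range (n + 1), ((1:ℝ) / 2) ^ j) *
              Real.exp (∑ j ∈ Finset.range (n + 1), ((1:ℝ) / 2) ^ j * (d / ℓ j ^ k)) *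
              ‖S (tt (n + 1)) u₀‖ ^ (((1:ℝ) / 2) ^ (n + 1)) *
              J ^ (1 - ((1:ℝ) / 2) ^ (n + 1)) := by
              rw [← Real.rpow_add hDpos, ← Real.exp_add, ← Real.rpow_add hJpos,
                Finset.sum_range_succ, Finset.sum_range_succ]
              congr 2
              rw [pow_succ]; ring
    -- bound on the exponential sum
    have hρρ : ρ * ρ = 1 / 2 := by
      rw [hρ_def, ← Real.rpow_add two_pos]
      norm_num
    have sum_le : ∀ n : ℕ,
        (∑ j ∈ Finset.range n, ((1:ℝ) / 2) ^ j * (d / ℓ j ^ k)) ≤ N / T ^ k := by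
      intro n
      have haux : (0:ℝ) < T / 2 * (1 - q) := by positivity
      have hak : (0:ℝ) < (T / 2 * (1 - q)) ^ k := Real.rpow_pos_of_pos haux k
      have hterm : ∀ j : ℕ, ((1:ℝ) / 2) ^ j * (d / ℓ j ^ k)
          = d / (T / 2 * (1 - q)) ^ k * ρ ^ j := by
        intro j
        have hℓj : ℓ j ^ k = (T / 2 * (1 - q)) ^ k * ρ ^ j := by
          simp only [hℓ_def]
          rw [Real.mul_rpow haux.le (hqn_pos j).le]
          congr 1
          rw [← Real.rpow_natCast q j, ← Real.rpow_mul hq_pos.le,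
            mul_comm (j : ℝ) k, Real.rpow_mul hq_pos.le, hqk, Real.rpow_natCast]
        rw [hℓj]
        have h12 : ((1:ℝ) / 2) ^ j = ρ ^ j * ρ ^ j := by
          rw [← mul_pow, hρρ]
        rw [h12]
        have hρj : (0:ℝ) < ρ ^ j := pow_pos hρ_pos j
        field_simp
      calc (∑ j ∈ Finset.range n, ((1:ℝ) / 2) ^ j * (d / ℓ j ^ k))
          = d / (T / 2 * (1 - q)) ^ k * ∑ j ∈ Finset.range n, ρ ^ j := by
            rw [Finset.mul_sum]
            exact Finset.sum_congr rfl fun j _ => hterm j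
        _ ≤ d / (T / 2 * (1 - q)) ^ k * (1 - ρ)⁻¹ := by
            apply mul_le_mul_of_nonneg_left (geom_le_aux hρ_pos.le hρ_lt_one n)
            positivity
        _ = N / T ^ k := by
            rw [hN_def]
            have hTk : (0:ℝ) < T ^ k := Real.rpow_pos_of_pos hT k
            have ha : ((2:ℝ) / (1 - q)) ^ k = T ^ k / (T / 2 * (1 - q)) ^ k := by
              rw [← Real.div_rpow hT.le haux.le]
              congr 1
              field_simp
            rw [ha]
            field_simp
    -- uniform bound for each n
    have final : ∀ n : ℕ, ‖S T u₀‖ ≤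
        D ^ (∑ j ∈ Finset.range n, ((1:ℝ) / 2) ^ j) * Real.exp (N / T ^ k) *
        G ^ (((1:ℝ) / 2) ^ n) * J ^ (1 - ((1:ℝ) / 2) ^ n) := by
      intro n
      refine le_trans (main n) ?_
      have e1 : Real.exp (∑ j ∈ Finset.range n, ((1:ℝ) / 2) ^ j * (d / ℓ j ^ k))
          ≤ Real.exp (N / T ^ k) := Real.exp_le_exp.mpr (sum_le n)
      have e2 : ‖S (tt n) u₀‖ ^ (((1:ℝ) / 2) ^ n) ≤ G ^ (((1:ℝ) / 2) ^ n) :=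
        Real.rpow_le_rpow (norm_nonneg _) (hgG n) (by positivity)
      apply mul_le_mul_of_nonneg_right _ (Real.rpow_nonneg hJ0 _)
      apply mul_le_mul _ e2 (Real.rpow_nonneg (norm_nonneg _) _)
        (mul_nonneg (Real.rpow_nonneg hDpos.le _) (Real.exp_pos _).le)
      exact mul_le_mul_of_nonneg_left e1 (Real.rpow_nonneg hDpos.le _)
    -- pass to the limit n → ∞
    have hsE : ∀ n : ℕ, (∑ j ∈ Finset.range n, ((1:ℝ) / 2) ^ j)
        = 2 - 2 * ((1:ℝ) / 2) ^ n := by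
      intro n
      rw [geom_sum_eq (by norm_num : ((1:ℝ) / 2) ≠ 1)]
      have : ((1:ℝ) / 2 - 1) ≠ 0 := by norm_num
      field_simp
      ring
    have final' : ∀ n : ℕ, ‖S T u₀‖ ≤
        Real.exp (Real.log D * (2 - 2 * ((1:ℝ) / 2) ^ n)) * Real.exp (N / T ^ k) *
        Real.exp (Real.log G * ((1:ℝ) / 2) ^ n) *
        Real.exp (Real.log J * (1 - ((1:ℝ) / 2) ^ n)) := by
      intro n
      have h := final n
      rwa [hsE n, Real.rpow_def_of_pos hDpos, Real.rpow_def_of_pos hGpos,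
        Real.rpow_def_of_pos hJpos] at h
    have hε_tend : Filter.Tendsto (fun n : ℕ => ((1:ℝ) / 2) ^ n)
        Filter.atTop (nhds 0) :=
      tendsto_pow_atTop_nhds_zero_of_lt_one (by norm_num) (by norm_num)
    have h1 : Filter.Tendsto (fun n : ℕ => Real.log D * (2 - 2 * ((1:ℝ) / 2) ^ n))
        Filter.atTop (nhds (Real.log D * 2)) := by
      have h2 : Filter.Tendsto (fun n : ℕ => 2 - 2 * ((1:ℝ) / 2) ^ n)
          Filter.atTop (nhds 2) := by
        have := (tendsto_const_nhds :
          Filter.Tendsto (fun _ : ℕ => (2:ℝ)) Filter.atTop (nhds 2)).sub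
          (hε_tend.const_mul 2)
        simpa using this
      exact h2.const_mul _
    have h2 : Filter.Tendsto (fun n : ℕ => Real.log G * ((1:ℝ) / 2) ^ n)
        Filter.atTop (nhds (Real.log G * 0)) := hε_tend.const_mul _
    have h3 : Filter.Tendsto (fun n : ℕ => Real.log J * (1 - ((1:ℝ) / 2) ^ n))
        Filter.atTop (nhds (Real.log J * 1)) := by
      have h4 : Filter.Tendsto (fun n : ℕ => 1 - ((1:ℝ) / 2) ^ n)
          Filter.atTop (nhds 1) := by
        have := (tendsto_const_nhds :
          Filter.Tendsto (fun _ : ℕ => (1:ℝ)) Filter.atTop (nhds 1)).sub hε_tend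
        simpa using this
      exact h4.const_mul _
    have hlim : Filter.Tendsto (fun n : ℕ =>
        Real.exp (Real.log D * (2 - 2 * ((1:ℝ) / 2) ^ n)) * Real.exp (N / T ^ k) *
        Real.exp (Real.log G * ((1:ℝ) / 2) ^ n) *
        Real.exp (Real.log J * (1 - ((1:ℝ) / 2) ^ n)))
        Filter.atTop (nhds (Real.exp (Real.log D * 2) * Real.exp (N / T ^ k) *
          Real.exp (Real.log G * 0) * Real.exp (Real.log J * 1))) := by
      exact ((((Real.continuous_exp.tendsto _).comp h1).mul tendsto_const_nhds).mul
        ((Real.continuous_exp.tendsto _).comp h2)).mul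
        ((Real.continuous_exp.tendsto _).comp h3)
    have hfin := ge_of_tendsto' hlim final'
    have hv1 : Real.exp (Real.log D * 2) = D ^ 2 := by
      rw [Real.exp_mul, Real.exp_log hDpos]
      norm_num
    have hv2 : Real.exp (Real.log G * 0) = 1 := by simp
    have hv3 : Real.exp (Real.log J * 1) = J := by
      rw [mul_one, Real.exp_log hJpos]
    rw [hv1, hv2, hv3, mul_one] at hfin
    have hD2 : D ^ 2 = θ T ^ 2 * c := by
      rw [hD_def, mul_pow, Real.sq_sqrt hcpos.le]
    rw [hD2, hc_def] at hfin
    calc ‖S T u₀‖ ≤ θ T ^ 2 * (‖B‖ * M * Real.exp (α * T)) * Real.exp (N / T ^ k) * J :=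
          hfin
      _ = θ T ^ 2 * ‖B‖ * M * Real.exp (α * T) * Real.exp (N / T ^ k) * J := by ring
end

section
/- There exists a constant K ≥ 1, depending only on N, μ, γ and ‖B‖, such that for every m ∈ ℕ, every t > 0 and every u₀ ∈ X: ‖S(t) u₀‖_X ≤ K exp( K t^{-γ/(1-γ)} ) ( e^{μ λ_m t / 2} ‖B S(t) u₀‖_U + e^{-μ λ_m t / 2} ‖u₀‖_X ). -/
open MeasureTheory Set RealInnerProductSpace

private lemma le_of_sq_le_sq_aux {a b : ℝ} (ha : 0 ≤ a) (hb : 0 ≤ b) (h : a^2 ≤ b^2) :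
    a ≤ b := by nlinarith

set_option maxHeartbeats 1000000 in
/-- **Quantitative estimate at one time with spectral parameter.**
There is `K ≥ 1`, depending only on `N, μ, γ, ‖B‖`, such that for every `m`, `t > 0` and
`u₀ ∈ X`,
`‖S t u₀‖ ≤ K e^{K t^{-γ/(1-γ)}} (e^{μ λ_m t/2} ‖B (S t u₀)‖ + e^{-μ λ_m t/2} ‖u₀‖)`. -/
theorem one_time_estimate_spectral_parameter
    {X U : Type*}
    [NormedAddCommGroup X] [InnerProductSpace ℝ X] [CompleteSpace X]
    [NormedAddCommGroup U] [InnerProductSpace ℝ U] [CompleteSpace U]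
    (S : ℝ → X →L[ℝ] X)
    (hS0 : S 0 = ContinuousLinearMap.id ℝ X)
    (hSsemi : ∀ t s : ℝ, 0 ≤ t → 0 ≤ s → S (t + s) = (S t).comp (S s))
    (hScont : ∀ x : X, ContinuousOn (fun t => S t x) (Set.Ici 0))
    (M α : ℝ) (hM : 1 ≤ M) (hα : 0 ≤ α)
    (hSbound : ∀ t : ℝ, 0 ≤ t → ∀ x : X, ‖S t x‖ ≤ M * Real.exp (α * t) * ‖x‖)
    (B : X →L[ℝ] U)
    -- Hypothesis (H)
    (Em : ℕ → Submodule ℝ X) (hclosed : ∀ m, IsClosed (Em m : Set X))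
    (hmonoE : Monotone Em)
    (Λ : ℕ → ℝ) (hΛ0 : 0 < Λ 0) (hΛmono : Monotone Λ)
    (hΛtop : Filter.Tendsto Λ Filter.atTop Filter.atTop)
    (μ γ N : ℝ) (hμ : 0 < μ) (hγ : γ ∈ Set.Ioo (0:ℝ) 1) (hN : 1 ≤ N)
    (hinv : ∀ (m : ℕ) (t : ℝ), 0 ≤ t → ∀ x ∈ Em m, S t x ∈ Em m)
    (hdecay : ∀ (m : ℕ) (t : ℝ), 0 < t → ∀ g ∈ (Em m)ᗮ,
      ‖S t g‖ ≤ Real.exp (-(μ * t * Λ m)) * ‖g‖)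
    (hspec : ∀ m : ℕ, ∀ f ∈ Em m, ‖f‖ ≤ N * Real.exp (N * Λ m ^ γ) * ‖B f‖) :
    ∃ K ≥ (1:ℝ), ∀ (m : ℕ) (t : ℝ), 0 < t → ∀ u₀ : X,
      ‖S t u₀‖ ≤ K * Real.exp (K * t ^ (-(γ / (1 - γ)))) *
        (Real.exp (μ * Λ m * t / 2) * ‖B (S t u₀)‖ +
          Real.exp (-(μ * Λ m * t / 2)) * ‖u₀‖) := by
  obtain ⟨hγ0, hγ1⟩ := hγ
  have h1γ : (0:ℝ) < 1 - γ := by linarith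
  set q : ℝ := γ / (1 - γ) with hq
  have hq0 : 0 < q := div_pos hγ0 h1γ
  set C₀ : ℝ := N ^ ((1:ℝ)/(1-γ)) * (2/μ) ^ q with hC₀def
  have hN0 : (0:ℝ) < N := by linarith
  have hC₀ : 0 ≤ C₀ := by positivity
  set K : ℝ := N * ‖B‖ + N + 1 + C₀ with hKdef
  have hB0 : (0:ℝ) ≤ ‖B‖ := norm_nonneg _
  have hK1 : (1:ℝ) ≤ K := by nlinarith
  refine ⟨K, hK1, ?_⟩
  intro m t ht u₀
  haveI : CompleteSpace (Em m) := (hclosed m).completeSpace_coe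
  have hΛ : 0 < Λ m := lt_of_lt_of_le hΛ0 (hΛmono (Nat.zero_le m))
  set τ : ℝ := t ^ (-q) with hτdef
  have hτ : 0 < τ := Real.rpow_pos_of_pos ht _
  -- Young's inequality step
  have key : N * Λ m ^ γ ≤ μ * Λ m * t / 2 + C₀ * τ := by
    have hbase : (0:ℝ) < μ * t / 2 := by positivity
    set a : ℝ := μ * t * Λ m / 2 with hadef
    have ha : 0 < a := by positivity
    set y : ℝ := N * (μ * t / 2) ^ (-γ) with hydef
    have hy : 0 ≤ y := by positivity
    have hpq : ((1:ℝ)/γ).HolderConjugate (1/(1-γ)) := by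
      refine Real.holderConjugate_iff.mpr ⟨?_, ?_⟩
      · rw [lt_div_iff₀ hγ0]; linarith
      · rw [one_div, one_div, inv_inv, inv_inv]; ring
    have hxy : N * Λ m ^ γ = a ^ γ * y := by
      have h1 : a = (μ * t / 2) * Λ m := by rw [hadef]; ring
      rw [h1, Real.mul_rpow hbase.le hΛ.le, hydef, Real.rpow_neg hbase.le]
      field_simp
    have hxp : (a ^ γ) ^ ((1:ℝ)/γ) = a := by
      rw [← Real.rpow_mul ha.le, mul_one_div, div_self hγ0.ne', Real.rpow_one]
    have hyq : y ^ ((1:ℝ)/(1-γ)) = C₀ * τ := by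
      have hμ2 : (0:ℝ) < μ / 2 := by positivity
      have h2 : ((μ * t / 2) ^ (-γ)) ^ ((1:ℝ)/(1-γ)) = (2/μ) ^ q * τ := by
        rw [← Real.rpow_mul hbase.le]
        have hexp : -γ * (1/(1-γ)) = -q := by rw [hq]; field_simp
        rw [hexp, show μ * t / 2 = (μ/2) * t by ring,
          Real.mul_rpow hμ2.le ht.le, Real.rpow_neg hμ2.le,
          Real.rpow_neg ht.le, show (2:ℝ)/μ = (μ/2)⁻¹ by field_simp,
          Real.inv_rpow hμ2.le, hτdef, Real.rpow_neg ht.le]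
      rw [hydef, Real.mul_rpow hN0.le (by positivity), h2, hC₀def]
      ring
    have hyoung := Real.young_inequality_of_nonneg
      (Real.rpow_nonneg ha.le γ) hy hpq
    rw [hxp, hyq] at hyoung
    have h3 : a ^ γ * y ≤ a * γ + (C₀ * τ) * (1 - γ) := by
      calc a ^ γ * y ≤ a / (1/γ) + (C₀ * τ) / (1/(1-γ)) := hyoung
        _ = a * γ + (C₀ * τ) * (1 - γ) := by field_simp
    have h4 : a * γ ≤ a := by nlinarith
    have h5 : (C₀ * τ) * (1 - γ) ≤ C₀ * τ := by nlinarith [mul_nonneg hC₀ hτ.le]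
    rw [hxy]
    calc a ^ γ * y ≤ a * γ + (C₀ * τ) * (1 - γ) := h3
      _ ≤ a + C₀ * τ := by linarith
      _ = μ * Λ m * t / 2 + C₀ * τ := by rw [hadef]; ring
  -- Functional analytic decomposition
  set w : X := S t u₀ with hwdef
  set f₀ : X := ((Em m).orthogonalProjectionOnto u₀ : X) with hf₀def
  set g₀ : X := u₀ - f₀ with hg₀def
  have hf₀mem : f₀ ∈ Em m := ((Em m).orthogonalProjectionOnto u₀).2
  have hg₀mem : g₀ ∈ (Em m)ᗮ := (Em m).sub_starProjection_mem_orthogonal u₀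
  have hg₀norm : ‖g₀‖ ≤ ‖u₀‖ := by
    have hinner : ⟪f₀, g₀⟫ = 0 := (Submodule.mem_orthogonal _ _).1 hg₀mem f₀ hf₀mem
    have hu : u₀ = f₀ + g₀ := by rw [hg₀def]; abel
    have := norm_add_sq_real f₀ g₀
    rw [hinner] at this
    have h2 : ‖u₀‖^2 = ‖f₀‖^2 + ‖g₀‖^2 := by rw [hu]; linarith
    refine le_of_sq_le_sq_aux (norm_nonneg _) (norm_nonneg _) ?_
    nlinarith [sq_nonneg ‖f₀‖]
  set Pw : X := ((Em m).orthogonalProjectionOnto w : X) with hPwdef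
  have hPwmem : Pw ∈ Em m := ((Em m).orthogonalProjectionOnto w).2
  have hQmem : w - Pw ∈ (Em m)ᗮ := (Em m).sub_starProjection_mem_orthogonal w
  -- minimality: ‖w - Pw‖ ≤ ‖S t g₀‖
  have hStf₀ : S t f₀ ∈ Em m := hinv m t ht.le f₀ hf₀mem
  have hsplit : w - S t f₀ = S t g₀ := by
    rw [hwdef, hg₀def, map_sub]
  have hmin : ‖w - Pw‖ ≤ ‖S t g₀‖ := by
    rw [← hsplit]
    have hd : Pw - S t f₀ ∈ Em m := Submodule.sub_mem _ hPwmem hStf₀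
    have hinner : ⟪w - Pw, Pw - S t f₀⟫ = 0 := by
      rw [real_inner_comm]
      exact (Submodule.mem_orthogonal _ _).1 hQmem _ hd
    have hdec : w - S t f₀ = (w - Pw) + (Pw - S t f₀) := by abel
    have := norm_add_sq_real (w - Pw) (Pw - S t f₀)
    rw [hinner] at this
    have h2 : ‖w - S t f₀‖^2 = ‖w - Pw‖^2 + ‖Pw - S t f₀‖^2 := by rw [hdec]; linarith
    refine le_of_sq_le_sq_aux (norm_nonneg _) (norm_nonneg _) ?_
    nlinarith [sq_nonneg ‖Pw - S t f₀‖]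
  set D : ℝ := Real.exp (-(μ * t * Λ m)) with hDdef
  have hQsmall : ‖w - Pw‖ ≤ D * ‖u₀‖ :=
    hmin.trans ((hdecay m t ht g₀ hg₀mem).trans
      (mul_le_mul_of_nonneg_left hg₀norm (Real.exp_pos _).le))
  set E : ℝ := Real.exp (N * Λ m ^ γ) with hEdef
  have hE1 : (1:ℝ) ≤ E := Real.one_le_exp (by positivity)
  have hPwbound : ‖Pw‖ ≤ N * E * (‖B w‖ + ‖B‖ * ‖w - Pw‖) := by
    have h1 := hspec m Pw hPwmem
    have h2 : ‖B Pw‖ ≤ ‖B w‖ + ‖B‖ * ‖w - Pw‖ := by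
      calc ‖B Pw‖ = ‖B w - B (w - Pw)‖ := by rw [map_sub]; congr 1; abel
        _ ≤ ‖B w‖ + ‖B (w - Pw)‖ := norm_sub_le _ _
        _ ≤ ‖B w‖ + ‖B‖ * ‖w - Pw‖ := by
            have := B.le_opNorm (w - Pw); linarith
    calc ‖Pw‖ ≤ N * E * ‖B Pw‖ := h1
      _ ≤ N * E * (‖B w‖ + ‖B‖ * ‖w - Pw‖) := by
          apply mul_le_mul_of_nonneg_left h2; positivity
  have hwbound : ‖w‖ ≤ N * E * ‖B w‖ + (N * E * ‖B‖ + 1) * (D * ‖u₀‖) := by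
    have h0 : ‖w‖ ≤ ‖Pw‖ + ‖w - Pw‖ := by
      calc ‖w‖ = ‖Pw + (w - Pw)‖ := by congr 1; abel
        _ ≤ ‖Pw‖ + ‖w - Pw‖ := norm_add_le _ _
    have hc : (0:ℝ) ≤ N * E * ‖B‖ + 1 := by positivity
    have h1 := mul_le_mul_of_nonneg_left hQsmall hc
    calc ‖w‖ ≤ ‖Pw‖ + ‖w - Pw‖ := h0
      _ ≤ N * E * (‖B w‖ + ‖B‖ * ‖w - Pw‖) + ‖w - Pw‖ := by linarith
      _ = N * E * ‖B w‖ + (N * E * ‖B‖ + 1) * ‖w - Pw‖ := by ring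
      _ ≤ N * E * ‖B w‖ + (N * E * ‖B‖ + 1) * (D * ‖u₀‖) := by linarith
  -- exponential bookkeeping
  set A : ℝ := K * Real.exp (K * τ) with hAdef
  have hCτK : Real.exp (C₀ * τ) ≤ Real.exp (K * τ) := by
    apply Real.exp_le_exp.2
    apply mul_le_mul_of_nonneg_right _ hτ.le
    rw [hKdef]; nlinarith [mul_nonneg hN0.le hB0]
  have hEle : E ≤ Real.exp (C₀ * τ) * Real.exp (μ * Λ m * t / 2) := by
    rw [hEdef, ← Real.exp_add]
    exact Real.exp_le_exp.2 (by linarith)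
  have hEDle : E * D ≤ Real.exp (C₀ * τ) * Real.exp (-(μ * Λ m * t / 2)) := by
    rw [hEdef, hDdef, ← Real.exp_add, ← Real.exp_add]
    apply Real.exp_le_exp.2
    have : μ * t * Λ m = μ * Λ m * t := by ring
    rw [this]; linarith
  have hDle : D ≤ Real.exp (C₀ * τ) * Real.exp (-(μ * Λ m * t / 2)) := by
    calc D = 1 * D := (one_mul D).symm
      _ ≤ E * D := by apply mul_le_mul_of_nonneg_right hE1 (Real.exp_pos _).le
      _ ≤ _ := hEDle
  -- final assembly
  have hr : 0 ≤ ‖B w‖ := norm_nonneg _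
  have hs : 0 ≤ ‖u₀‖ := norm_nonneg _
  have hexp2 : (0:ℝ) < Real.exp (μ * Λ m * t / 2) := Real.exp_pos _
  have hexp3 : (0:ℝ) < Real.exp (-(μ * Λ m * t / 2)) := Real.exp_pos _
  have hNK : N ≤ K := by rw [hKdef]; nlinarith [mul_nonneg hN0.le hB0]
  have hNBK : N * ‖B‖ + 1 ≤ K := by rw [hKdef]; linarith
  have hterm1 : N * E * ‖B w‖ ≤ A * (Real.exp (μ * Λ m * t / 2) * ‖B w‖) := by
    rw [hAdef]
    have : N * E ≤ K * Real.exp (K * τ) * Real.exp (μ * Λ m * t / 2) := by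
      calc N * E ≤ N * (Real.exp (C₀ * τ) * Real.exp (μ * Λ m * t / 2)) :=
            mul_le_mul_of_nonneg_left hEle hN0.le
        _ ≤ K * (Real.exp (K * τ) * Real.exp (μ * Λ m * t / 2)) := by
            apply mul_le_mul hNK _ (by positivity) (by linarith)
            exact mul_le_mul_of_nonneg_right hCτK hexp2.le
        _ = K * Real.exp (K * τ) * Real.exp (μ * Λ m * t / 2) := by ring
    calc N * E * ‖B w‖ ≤ K * Real.exp (K * τ) * Real.exp (μ * Λ m * t / 2) * ‖B w‖ :=
          mul_le_mul_of_nonneg_right this hr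
      _ = K * Real.exp (K * τ) * (Real.exp (μ * Λ m * t / 2) * ‖B w‖) := by ring
  have hterm2 : (N * E * ‖B‖ + 1) * (D * ‖u₀‖) ≤
      A * (Real.exp (-(μ * Λ m * t / 2)) * ‖u₀‖) := by
    rw [hAdef]
    have h1 : (N * E * ‖B‖ + 1) * D ≤ K * Real.exp (K * τ) * Real.exp (-(μ * Λ m * t / 2)) := by
      have hD0 : (0:ℝ) < D := Real.exp_pos _
      calc (N * E * ‖B‖ + 1) * D = N * ‖B‖ * (E * D) + D := by ring
        _ ≤ N * ‖B‖ * (Real.exp (C₀ * τ) * Real.exp (-(μ * Λ m * t / 2)))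
              + Real.exp (C₀ * τ) * Real.exp (-(μ * Λ m * t / 2)) := by
            have := mul_le_mul_of_nonneg_left hEDle (mul_nonneg hN0.le hB0)
            linarith
        _ = (N * ‖B‖ + 1) * (Real.exp (C₀ * τ) * Real.exp (-(μ * Λ m * t / 2))) := by ring
        _ ≤ K * (Real.exp (K * τ) * Real.exp (-(μ * Λ m * t / 2))) := by
            apply mul_le_mul hNBK _ (by positivity) (by linarith)
            exact mul_le_mul_of_nonneg_right hCτK hexp3.le
        _ = K * Real.exp (K * τ) * Real.exp (-(μ * Λ m * t / 2)) := by ring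
    calc (N * E * ‖B‖ + 1) * (D * ‖u₀‖) = ((N * E * ‖B‖ + 1) * D) * ‖u₀‖ := by ring
      _ ≤ (K * Real.exp (K * τ) * Real.exp (-(μ * Λ m * t / 2))) * ‖u₀‖ :=
          mul_le_mul_of_nonneg_right h1 hs
      _ = K * Real.exp (K * τ) * (Real.exp (-(μ * Λ m * t / 2)) * ‖u₀‖) := by ring
  calc ‖S t u₀‖ = ‖w‖ := rfl
    _ ≤ N * E * ‖B w‖ + (N * E * ‖B‖ + 1) * (D * ‖u₀‖) := hwbound
    _ ≤ A * (Real.exp (μ * Λ m * t / 2) * ‖B w‖)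
        + A * (Real.exp (-(μ * Λ m * t / 2)) * ‖u₀‖) := add_le_add hterm1 hterm2
    _ = A * (Real.exp (μ * Λ m * t / 2) * ‖B w‖ + Real.exp (-(μ * Λ m * t / 2)) * ‖u₀‖) := by
        ring
end

section
/- Let T > 0, d > 0, k > 0, set q := ((2d+1)/(2d+2))^{1/k} ∈ (0,1) and ℓ_m := q^m T for m ≥ 0. Let h : [0,T] → [0,∞) be a bounded function and let (b_m)_{m ≥ 0} be nonnegative real numbers such that for every m ≥ 0: exp( -(2d+1)/(ℓ_m - ℓ_{m+1})^k ) h(ℓ_m) - exp( -(2d+2)/(ℓ_m - ℓ_{m+1})^k ) h(ℓ_{m+1}) ≤ b_m. Then h(T) ≤ exp( (2d+1) / ((1-q) T)^k ) · Σ_{m=0}^{∞} b_m, where the sum is taken in [0,∞]. -/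
open MeasureTheory Set

/-- **Telescoping-series summation lemma.**
With `q = ((2d+1)/(2d+2))^{1/k}` and `ℓ_m = q^m T`, if the weighted differences
`exp(-(2d+1)/(ℓ_m-ℓ_{m+1})^k) h(ℓ_m) - exp(-(2d+2)/(ℓ_m-ℓ_{m+1})^k) h(ℓ_{m+1})` are
bounded by `b_m`, then `h(T) ≤ exp((2d+1)/((1-q)T)^k) Σ_m b_m` (sum in `[0,∞]`). -/
theorem telescoping_series_summation_lemma
    (T d k : ℝ) (hT : 0 < T) (hd : 0 < d) (hk : 0 < k)
    (q : ℝ) (hq : q = ((2 * d + 1) / (2 * d + 2)) ^ (1 / k))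
    (ℓ : ℕ → ℝ) (hℓ : ∀ m : ℕ, ℓ m = q ^ m * T)
    (h : ℝ → ℝ)
    (hnonneg : ∀ t ∈ Set.Icc (0:ℝ) T, 0 ≤ h t)
    (hbdd : ∃ Cb : ℝ, ∀ t ∈ Set.Icc (0:ℝ) T, h t ≤ Cb)
    (b : ℕ → ℝ) (hb : ∀ m : ℕ, 0 ≤ b m)
    (hrec : ∀ m : ℕ,
      Real.exp (-(2 * d + 1) / (ℓ m - ℓ (m + 1)) ^ k) * h (ℓ m) -
        Real.exp (-(2 * d + 2) / (ℓ m - ℓ (m + 1)) ^ k) * h (ℓ (m + 1)) ≤ b m) :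
    ENNReal.ofReal (h T) ≤
      ENNReal.ofReal (Real.exp ((2 * d + 1) / ((1 - q) * T) ^ k)) *
        ∑' m : ℕ, ENNReal.ofReal (b m) := by
  have hc2pos : (0:ℝ) < (2 * d + 1) / (2 * d + 2) := by positivity
  have hc2lt1 : (2 * d + 1) / (2 * d + 2) < 1 := by
    rw [div_lt_one (by linarith)]; linarith
  have hq0 : 0 < q := by rw [hq]; positivity
  have hq1 : q < 1 := by
    rw [hq]; exact Real.rpow_lt_one hc2pos.le hc2lt1 (by positivity)
  have hqk : q ^ k = (2 * d + 1) / (2 * d + 2) := by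
    rw [hq, ← Real.rpow_mul hc2pos.le, one_div, inv_mul_cancel₀ hk.ne', Real.rpow_one]
  -- the gap
  have hΔ : ∀ m : ℕ, ℓ m - ℓ (m + 1) = q ^ m * ((1 - q) * T) := by
    intro m; rw [hℓ, hℓ, pow_succ]; ring
  have hcpos : 0 < (1 - q) * T := by
    have : 0 < 1 - q := by linarith
    positivity
  have hΔpos : ∀ m : ℕ, 0 < ℓ m - ℓ (m + 1) := by
    intro m; rw [hΔ m]; positivity
  have hΔk : ∀ m : ℕ, (ℓ m - ℓ (m + 1)) ^ k = (q ^ k) ^ m * ((1 - q) * T) ^ k := by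
    intro m
    rw [hΔ m, Real.mul_rpow (by positivity) hcpos.le, ← Real.rpow_natCast q m,
      ← Real.rpow_mul hq0.le, mul_comm (m : ℝ) k, Real.rpow_mul hq0.le,
      Real.rpow_natCast]
  have hΔkpos : ∀ m : ℕ, 0 < (ℓ m - ℓ (m + 1)) ^ k := fun m =>
    Real.rpow_pos_of_pos (hΔpos m) k
  -- key identity
  have hkey : ∀ m : ℕ, (2 * d + 2) / (ℓ m - ℓ (m + 1)) ^ k
      = (2 * d + 1) / (ℓ (m + 1) - ℓ (m + 2)) ^ k := by
    intro m
    have h1 : (ℓ (m + 1) - ℓ (m + 2)) ^ k = q ^ k * (ℓ m - ℓ (m + 1)) ^ k := by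
      rw [hΔk, hΔk, pow_succ]; ring
    have hX : (ℓ m - ℓ (m + 1)) ^ k ≠ 0 := (hΔkpos m).ne'
    rw [h1, hqk]
    field_simp
  -- the sequence a
  set a : ℕ → ℝ := fun m =>
    Real.exp (-(2 * d + 1) / (ℓ m - ℓ (m + 1)) ^ k) * h (ℓ m) with ha
  have hℓmem : ∀ m : ℕ, ℓ m ∈ Set.Icc (0:ℝ) T := by
    intro m
    rw [hℓ]
    constructor
    · positivity
    · calc q ^ m * T ≤ 1 * T := by
            apply mul_le_mul_of_nonneg_right _ hT.le
            exact pow_le_one₀ hq0.le hq1.le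
        _ = T := one_mul T
  have hanonneg : ∀ m : ℕ, 0 ≤ a m := fun m =>
    mul_nonneg (Real.exp_pos _).le (hnonneg _ (hℓmem m))
  have hstep : ∀ m : ℕ, a m - a (m + 1) ≤ b m := by
    intro m
    have := hrec m
    have h2 : Real.exp (-(2 * d + 2) / (ℓ m - ℓ (m + 1)) ^ k)
        = Real.exp (-(2 * d + 1) / (ℓ (m + 1) - ℓ (m + 2)) ^ k) := by
      rw [neg_div, neg_div, hkey m]
    simp only [ha]
    rw [← h2]
    exact this
  -- telescoping
  have htel : ∀ N : ℕ, a 0 ≤ a N + ∑ m ∈ Finset.range N, b m := by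
    intro N
    induction N with
    | zero => simp
    | succ n ih =>
      rw [Finset.sum_range_succ]
      have := hstep n
      linarith
  -- bound on a N
  obtain ⟨Cb, hCb⟩ := hbdd
  set M : ℝ := max Cb 0 with hM
  have hMnonneg : 0 ≤ M := le_max_right _ _
  have hhM : ∀ m : ℕ, h (ℓ m) ≤ M := fun m =>
    le_trans (hCb _ (hℓmem m)) (le_max_left _ _)
  set r : ℝ := q ^ k with hr
  have hr0 : 0 < r := Real.rpow_pos_of_pos hq0 k
  have hr1 : r < 1 := by rw [hqk]; exact hc2lt1
  set C : ℝ := ((1 - q) * T) ^ k * M / (2 * d + 1) with hC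
  have habound : ∀ N : ℕ, a N ≤ r ^ N * C := by
    intro N
    have hexp : Real.exp (-(2 * d + 1) / (ℓ N - ℓ (N + 1)) ^ k)
        ≤ (ℓ N - ℓ (N + 1)) ^ k / (2 * d + 1) := by
      rw [neg_div, Real.exp_neg]
      rw [inv_le_comm₀ (Real.exp_pos _) (div_pos (hΔkpos N) (by linarith))]
      calc ((ℓ N - ℓ (N + 1)) ^ k / (2 * d + 1))⁻¹
          = (2 * d + 1) / (ℓ N - ℓ (N + 1)) ^ k := by
            rw [inv_div]
        _ ≤ Real.exp ((2 * d + 1) / (ℓ N - ℓ (N + 1)) ^ k) := by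
            have := Real.add_one_le_exp ((2 * d + 1) / (ℓ N - ℓ (N + 1)) ^ k)
            linarith
    calc a N ≤ ((ℓ N - ℓ (N + 1)) ^ k / (2 * d + 1)) * M := by
          exact mul_le_mul hexp (hhM N) (hnonneg _ (hℓmem N))
            (div_pos (hΔkpos N) (by linarith)).le
      _ = r ^ N * C := by rw [hΔk N, hC]; ring
  have hatend : Filter.Tendsto a Filter.atTop (nhds 0) := by
    apply squeeze_zero hanonneg habound
    rw [show (0:ℝ) = 0 * C by ring]
    exact (tendsto_pow_atTop_nhds_zero_of_lt_one hr0.le hr1).mul_const C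
  -- pass to ENNReal
  set S : ENNReal := ∑' m : ℕ, ENNReal.ofReal (b m) with hS
  have hENNstep : ∀ N : ℕ, ENNReal.ofReal (a 0) ≤ ENNReal.ofReal (a N) + S := by
    intro N
    calc ENNReal.ofReal (a 0)
        ≤ ENNReal.ofReal (a N + ∑ m ∈ Finset.range N, b m) :=
          ENNReal.ofReal_le_ofReal (htel N)
      _ ≤ ENNReal.ofReal (a N) + ENNReal.ofReal (∑ m ∈ Finset.range N, b m) :=
          ENNReal.ofReal_add_le
      _ ≤ ENNReal.ofReal (a N) + S := by
          gcongr
          rw [ENNReal.ofReal_sum_of_nonneg (fun m _ => hb m)]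
          exact ENNReal.sum_le_tsum _
  have ha0S : ENNReal.ofReal (a 0) ≤ S := by
    have hlim : Filter.Tendsto (fun N => ENNReal.ofReal (a N) + S)
        Filter.atTop (nhds (0 + S)) := by
      apply Filter.Tendsto.add_const
      simpa using ENNReal.tendsto_ofReal hatend
    rw [zero_add] at hlim
    exact ge_of_tendsto hlim (Filter.Eventually.of_forall hENNstep)
  -- conclude
  have hΔ0 : ℓ 0 - ℓ 1 = (1 - q) * T := by rw [hΔ 0]; simp
  have hhT : h T = Real.exp ((2 * d + 1) / ((1 - q) * T) ^ k) * a 0 := by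
    simp only [ha, hΔ0]
    rw [hℓ 0, pow_zero, one_mul, ← mul_assoc, ← Real.exp_add, neg_div]
    simp
  rw [hhT, ENNReal.ofReal_mul (Real.exp_pos _).le]
  exact mul_le_mul_right ha0S _
end
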